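/- Let q be a prime power, m a positive integer, and θ the Frobenius automorphism x ↦ x^q on F_{q^m}. For σ = θ^u with u ∈ {0, ..., m−1} and zero derivation, the number of distinct (σ,0)-conjugacy classes of F_{q^m} equals q^{gcd(u,m)}, where two elements a, b are (σ,0)-conjugate if there exists c ∈ F_{q^m}* with σ(c)·a·c^{−1} = b. -/

import Mathlib

/-- gcd of Mersenne-type numbers. -/
lemma mersenne_gcd (q : ℕ) (hq : 1 ≤ q) :
    ∀ u m : ℕ, Nat.gcd (q ^ u - 1) (q ^ m - 1) = q ^ (Nat.gcd u m) - 1 := by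
  intro u
  induction u using Nat.strong_induction_on with
  | _ u ih =>
    intro m
    rcases Nat.eq_zero_or_pos u with rfl | hu
    · simp
    obtain ⟨t, ht⟩ : (q ^ u - 1) ∣ ((q ^ u) ^ (m / u) - 1) := by
      simpa using Nat.sub_dvd_pow_sub_pow (q ^ u) 1 (m / u)
    have hB : 1 ≤ q ^ (m % u) := Nat.one_le_pow _ _ hq
    have hA : 1 ≤ (q ^ u) ^ (m / u) := Nat.one_le_pow _ _ (Nat.one_le_pow _ _ hq)
    have hAB : q ^ (m % u) * (q ^ u) ^ (m / u) = q ^ m := by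
      rw [← pow_mul, ← pow_add]
      rw [Nat.add_comm, Nat.div_add_mod]
    have h1 : q ^ (m % u) * (q ^ u) ^ (m / u)
        = q ^ (m % u) * ((q ^ u) ^ (m / u) - 1) + q ^ (m % u) := by
      conv_lhs => rw [← Nat.sub_add_cancel hA]
      rw [mul_add, mul_one]
    have key : q ^ m - 1 = (q ^ (m % u) - 1) + (q ^ u - 1) * (q ^ (m % u) * t) := by
      have h3 : (q ^ u - 1) * (q ^ (m % u) * t) = q ^ (m % u) * ((q ^ u) ^ (m / u) - 1) := by
        rw [ht]; ring
      rw [h3, ← hAB]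
      omega
    calc Nat.gcd (q ^ u - 1) (q ^ m - 1)
        = Nat.gcd (q ^ u - 1) ((q ^ (m % u) - 1) + (q ^ u - 1) * (q ^ (m % u) * t)) := by
          rw [← key]
      _ = Nat.gcd (q ^ u - 1) (q ^ (m % u) - 1) := Nat.gcd_add_mul_left_right _ _ _
      _ = Nat.gcd (q ^ (m % u) - 1) (q ^ u - 1) := Nat.gcd_comm _ _
      _ = q ^ (Nat.gcd (m % u) u) - 1 := ih (m % u) (Nat.mod_lt _ hu) u
      _ = q ^ (Nat.gcd u m) - 1 := by rw [Nat.gcd_rec u m]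

open Subgroup

lemma pow_surj_iff {G : Type*} [CommGroup G] [Fintype G] [IsCyclic G] (k d e : ℕ) (x : G)
    (hd : Nat.gcd (Fintype.card G) k = d) (he : Fintype.card G / d = e) :
    (∃ c : G, c ^ k = x) ↔ x ^ e = 1 := by
  have hN : 0 < Fintype.card G := Fintype.card_pos
  have hdN : d ∣ Fintype.card G := hd ▸ Nat.gcd_dvd_left _ k
  have hdk : d ∣ k := hd ▸ Nat.gcd_dvd_right _ k
  have hd0 : 0 < d := hd ▸ Nat.gcd_pos_of_pos_left _ hN
  have hde : d * e = Fintype.card G := by rw [← he, Nat.mul_div_cancel' hdN]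
  constructor
  · rintro ⟨c, rfl⟩
    obtain ⟨s, hs⟩ := hdk
    rw [← pow_mul]
    have h1 : k * e = Fintype.card G * s := by
      rw [hs, ← hde]; ring
    rw [h1, pow_mul, pow_card_eq_one, one_pow]
  · intro hx
    obtain ⟨g, hg⟩ := IsCyclic.exists_generator (α := G)
    have hog : orderOf g = Fintype.card G := by
      rw [orderOf_eq_card_of_forall_mem_zpowers hg, Nat.card_eq_fintype_card]
    obtain ⟨i, hi⟩ := mem_powers_iff_mem_zpowers.mpr (hg x)
    dsimp only at hi
    have hiN : orderOf g ∣ i * e := orderOf_dvd_of_pow_eq_one (by rw [pow_mul, hi, hx])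
    rw [hog] at hiN
    have hdi : d ∣ i := by
      have he0 : 0 < e := by
        rcases Nat.eq_zero_or_pos e with h | h
        · rw [h, mul_zero] at hde; omega
        · exact h
      refine Nat.dvd_of_mul_dvd_mul_right he0 ?_
      rw [hde]; exact hiN
    obtain ⟨j, hj⟩ := hdi
    have hb := Nat.gcd_eq_gcd_ab (Fintype.card G) k
    rw [hd] at hb
    refine ⟨g ^ (Nat.gcdB (Fintype.card G) k * (j : ℤ)), ?_⟩
    have hgN : g ^ ((Fintype.card G : ℕ) : ℤ) = 1 := by rw [zpow_natCast, pow_card_eq_one]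
    have hdz : ((d : ℤ)) * j
        = (Fintype.card G : ℤ) * (Nat.gcdA (Fintype.card G) k * j)
          + (Nat.gcdB (Fintype.card G) k * j) * k := by
      rw [hb]; ring
    calc (g ^ (Nat.gcdB (Fintype.card G) k * (j : ℤ))) ^ k
        = g ^ ((Nat.gcdB (Fintype.card G) k * (j : ℤ)) * k) := by
          rw [← zpow_natCast (g ^ (Nat.gcdB (Fintype.card G) k * (j : ℤ))) k, ← zpow_mul]
      _ = g ^ ((Fintype.card G : ℤ) * (Nat.gcdA (Fintype.card G) k * j)
            + (Nat.gcdB (Fintype.card G) k * j) * k) := by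
          rw [zpow_add, zpow_mul g ((Fintype.card G : ℕ) : ℤ), hgN, one_zpow, one_mul]
      _ = g ^ (((d : ℤ)) * j) := by rw [hdz]
      _ = g ^ (d * j) := by rw [← zpow_natCast g (d * j)]; norm_cast
      _ = x := by rw [← hj, hi]

lemma card_pow_eq_one_of_dvd {G : Type*} [CommGroup G] [Fintype G] [IsCyclic G] {n : ℕ}
    (hn : n ∣ Fintype.card G) (hn0 : 0 < n) :
    Nat.card {x : G | x ^ n = 1} = n := by
  have hN : 0 < Fintype.card G := Fintype.card_pos
  obtain ⟨g, hg⟩ := IsCyclic.exists_generator (α := G)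
  have hog : orderOf g = Fintype.card G := by
    rw [orderOf_eq_card_of_forall_mem_zpowers hg, Nat.card_eq_fintype_card]
  have hset : {x : G | x ^ n = 1} = ↑(Subgroup.zpowers (g ^ (Fintype.card G / n))) := by
    ext x
    simp only [Set.mem_setOf_eq, SetLike.mem_coe]
    constructor
    · intro hx
      obtain ⟨i, hi⟩ := mem_powers_iff_mem_zpowers.mpr (hg x)
      dsimp only at hi
      have hdvd : orderOf g ∣ i * n := orderOf_dvd_of_pow_eq_one (by rw [pow_mul, hi, hx])
      rw [hog] at hdvd
      have h2 : (Fintype.card G / n) ∣ i := by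
        refine Nat.dvd_of_mul_dvd_mul_right hn0 ?_
        rwa [Nat.div_mul_cancel hn]
      obtain ⟨j, hj⟩ := h2
      refine ⟨(j : ℤ), ?_⟩
      show (g ^ (Fintype.card G / n)) ^ (j : ℤ) = x
      rw [zpow_natCast, ← pow_mul, ← hj, hi]
    · rintro ⟨z, rfl⟩
      show ((g ^ (Fintype.card G / n)) ^ z) ^ n = 1
      have h1 : (g ^ (Fintype.card G / n)) ^ n = 1 := by
        rw [← pow_mul, Nat.div_mul_cancel hn, ← hog, pow_orderOf_eq_one]
      rw [← zpow_natCast ((g ^ (Fintype.card G / n)) ^ z) n, ← zpow_mul, mul_comm, zpow_mul,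
        zpow_natCast, h1, one_zpow]
  rw [hset]
  have h2 : Nat.card ↥((Subgroup.zpowers (g ^ (Fintype.card G / n)) : Subgroup G) : Set G)
      = Nat.card ↥(Subgroup.zpowers (g ^ (Fintype.card G / n))) := rfl
  rw [h2, Nat.card_zpowers, orderOf_pow, hog, Nat.gcd_eq_right (Nat.div_dvd_of_dvd hn),
    Nat.div_div_self hn hN.ne']

/-- The number of distinct (σ,0)-conjugacy classes of `F_{q^m}` for `σ = θ^u`
(`θ` the Frobenius) equals `q^(gcd(u,m))`. -/
theorem stmt_1 (q m u : ℕ) (hq : IsPrimePow q) (hm : 0 < m) (hu : u < m)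
    (F : Type*) [Field F] [Fintype F] (hcard : Fintype.card F = q ^ m)
    (σ : F ≃+* F) (hσ : ∀ x : F, σ x = x ^ q ^ u) :
    Nat.card {S : Set F | ∃ a : F, S = {b | ∃ c : F, c ≠ 0 ∧ σ c * a * c⁻¹ = b}} =
      q ^ Nat.gcd u m := by
  classical
  have hq2 : 2 ≤ q := hq.two_le
  have hg0 : 0 < Nat.gcd u m := Nat.gcd_pos_of_pos_right _ hm
  have hqm1 : 2 ≤ q ^ m := le_trans hq2 (Nat.le_self_pow hm.ne' q)
  have hqu1 : 1 ≤ q ^ u := Nat.one_le_pow _ _ (by omega)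
  have hqg1 : 2 ≤ q ^ Nat.gcd u m := le_trans hq2 (Nat.le_self_pow hg0.ne' q)
  set N := q ^ m - 1 with hN
  set k := q ^ u - 1 with hk
  set d := q ^ Nat.gcd u m - 1 with hdd
  have hN0 : 0 < N := by omega
  have hd0 : 0 < d := by omega
  have hgcd : Nat.gcd N k = d := by
    rw [hN, hk, hdd, mersenne_gcd q (by omega) m u, Nat.gcd_comm]
  have hdN : d ∣ N := hgcd ▸ Nat.gcd_dvd_left N k
  have hdk : d ∣ k := hgcd ▸ Nat.gcd_dvd_right N k
  set e := N / d with he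
  have he0 : 0 < e := Nat.div_pos (Nat.le_of_dvd hN0 hdN) hd0
  have hed : e * d = N := Nat.div_mul_cancel hdN
  have hcardU : Fintype.card Fˣ = N := by rw [Fintype.card_units, hcard]
  have hUN : ∀ x : Fˣ, x ^ N = 1 := fun x => by rw [← hcardU, pow_card_eq_one]
  have hFN : ∀ c : F, c ≠ 0 → c ^ N = 1 := by
    intro c hc
    have := FiniteField.pow_card_sub_one_eq_one c hc
    rwa [hcard] at this
  -- rewrite the conjugation
  have hσ' : ∀ c : F, c ≠ 0 → ∀ a : F, σ c * a * c⁻¹ = c ^ k * a := by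
    intro c hc a
    rw [hσ]
    have hqu : q ^ u = k + 1 := by omega
    rw [hqu, pow_succ]
    field_simp
  -- the key characterization
  have hC : ∀ a b : F, (∃ c : F, c ≠ 0 ∧ σ c * a * c⁻¹ = b) ↔ a ^ e = b ^ e := by
    intro a b
    constructor
    · rintro ⟨c, hc, rfl⟩
      rw [hσ' c hc a]
      rcases eq_or_ne a 0 with rfl | ha
      · rw [mul_zero]
      · rw [mul_pow, ← pow_mul]
        obtain ⟨s, hs⟩ := hdk
        have h1 : k * e = N * s := by rw [hs, ← hed]; ring
        rw [h1, pow_mul, hFN c hc, one_pow, one_mul]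
    · intro hab
      rcases eq_or_ne a 0 with rfl | ha
      · have hb : b = 0 := by
          rw [zero_pow he0.ne'] at hab
          exact (pow_eq_zero_iff he0.ne').mp hab.symm
        exact ⟨1, one_ne_zero, by rw [hb, mul_zero, zero_mul]⟩
      · have hb : b ≠ 0 := by
          intro h
          rw [h, zero_pow he0.ne'] at hab
          exact ha ((pow_eq_zero_iff he0.ne').mp hab)
        have hx : (Units.mk0 b hb * (Units.mk0 a ha)⁻¹) ^ e = 1 := by
          rw [Units.ext_iff]
          push_cast
          rw [mul_pow]
          field_simp
          simp only [Units.val_mk0, one_div, inv_pow, hab]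
          exact mul_inv_cancel₀ (pow_ne_zero _ hb)
        obtain ⟨cu, hcu⟩ := (pow_surj_iff k d e (Units.mk0 b hb * (Units.mk0 a ha)⁻¹)
          (by rw [hcardU, hgcd]) (by rw [hcardU])).mpr hx
        refine ⟨(cu : F), cu.ne_zero, ?_⟩
        rw [hσ' _ cu.ne_zero]
        have h2 : cu ^ k * Units.mk0 a ha = Units.mk0 b hb := by
          rw [hcu, inv_mul_cancel_right]
        have h3 := congrArg Units.val h2
        push_cast at h3
        simpa using h3
  -- classes are fibers of a ↦ a ^ e
  have hCeq : ∀ a : F, {b | ∃ c : F, c ≠ 0 ∧ σ c * a * c⁻¹ = b} = (· ^ e) ⁻¹' {a ^ e} := by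
    intro a
    ext b
    simp only [Set.mem_setOf_eq, Set.mem_preimage, Set.mem_singleton_iff]
    rw [hC a b, eq_comm]
  have key : Nat.card {S : Set F | ∃ a : F, S = {b | ∃ c : F, c ≠ 0 ∧ σ c * a * c⁻¹ = b}}
      = Nat.card (Set.range (fun a : F => a ^ e)) := by
    apply Nat.card_congr
    refine (Equiv.ofBijective (fun y : Set.range (fun a : F => a ^ e) =>
      (⟨(· ^ e) ⁻¹' {y.1}, ?_⟩ :
        {S : Set F | ∃ a : F, S = {b | ∃ c : F, c ≠ 0 ∧ σ c * a * c⁻¹ = b}})) ⟨?_, ?_⟩).symm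
    · obtain ⟨a, ha⟩ := y.2
      dsimp only at ha
      exact ⟨a, by rw [hCeq a, ha]⟩
    · rintro ⟨y1, a1, ha1⟩ ⟨y2, a2, ha2⟩ h
      simp only [Subtype.mk.injEq] at h
      apply Subtype.ext
      have : a1 ∈ (· ^ e) ⁻¹' {y1} := by simp [← ha1]
      rw [h] at this
      simp only [Set.mem_preimage, Set.mem_singleton_iff] at this
      simp only [← ha1] at this ⊢
      rw [this]
    · rintro ⟨T, a, hT⟩
      refine ⟨⟨a ^ e, a, rfl⟩, ?_⟩
      apply Subtype.ext
      simp only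
      rw [hT, hCeq a]
  rw [key]
  -- compute the range
  have hrange : Set.range (fun a : F => a ^ e)
      = insert (0 : F) (Units.val '' {x : Fˣ | x ^ d = 1}) := by
    ext y
    constructor
    · rintro ⟨a, rfl⟩
      rcases eq_or_ne a 0 with rfl | ha
      · exact Set.mem_insert_iff.mpr (Or.inl (zero_pow he0.ne'))
      · refine Set.mem_insert_iff.mpr (Or.inr ⟨Units.mk0 a ha ^ e, ?_, by push_cast; rfl⟩)
        show (Units.mk0 a ha ^ e) ^ d = 1
        rw [← pow_mul, hed, hUN]
    · rintro (rfl | ⟨x, hx, rfl⟩)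
      · exact ⟨0, zero_pow he0.ne'⟩
      · have hge : Nat.gcd (Fintype.card Fˣ) e = e := by
          rw [hcardU]
          exact Nat.gcd_eq_right (Nat.div_dvd_of_dvd hdN)
        have hNe : Fintype.card Fˣ / e = d := by
          rw [hcardU, he, Nat.div_div_self hdN hN0.ne']
        obtain ⟨c, hc⟩ := (pow_surj_iff e e d x hge hNe).mpr hx
        exact ⟨(c : F), by rw [← hc]; push_cast; rfl⟩
  rw [hrange]
  have h0 : (0 : F) ∉ Units.val '' {x : Fˣ | x ^ d = 1} := by
    rintro ⟨x, -, hx⟩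
    exact x.ne_zero hx
  have hfin : (Units.val '' {x : Fˣ | x ^ d = 1}).Finite := Set.toFinite _
  rw [Nat.card_coe_set_eq, Set.ncard_insert_of_notMem h0 hfin,
    Set.ncard_image_of_injective _ Units.val_injective,
    ← Nat.card_coe_set_eq, card_pow_eq_one_of_dvd (by rw [hcardU]; exact hdN) hd0]
  omega
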